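/- arXiv:2010.05862 — 2 statements merged into one kernel-verified Lean document; each statement's English description precedes it below -/
import Mathlib

section
/- Let (X,d) be a metric space, let x_1,…,x_M and y_1,…,y_N be points of X, and let p ∈ Δ^M, q ∈ Δ^N be probability vectors with strictly positive entries. For all ρ₁, ρ₂ ≥ 0, the discrete robust optimal transport cost admits the Kantorovich–Rubinstein-type dual form: W^rob_{ρ₁,ρ₂}(p,q) = inf over probability vectors p̃ ∈ Δ^M and q̃ ∈ Δ^N satisfying D_{χ²}(p̃‖p) ≤ ρ₁ and D_{χ²}(q̃‖q) ≤ ρ₂ of [ sup over functions D : X → ℝ that are 1-Lipschitz (|D(x)−D(x')| ≤ d(x,x') for all x,x') of Σ_{i=1}^M p̃_i D(x_i) − Σ_{j=1}^N q̃_j D(y_j) ]. -/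
open Finset

/-- Discrete optimal transport cost between weighted point configurations. -/
noncomputable def discreteW {X : Type*} [MetricSpace X] {M N : ℕ}
    (x : Fin M → X) (y : Fin N → X) (p : Fin M → ℝ) (q : Fin N → ℝ) : ℝ :=
  sInf { c : ℝ | ∃ π : Fin M → Fin N → ℝ,
    (∀ i j, 0 ≤ π i j) ∧ (∀ i, ∑ j, π i j = p i) ∧ (∀ j, ∑ i, π i j = q j) ∧
    c = ∑ i, ∑ j, π i j * dist (x i) (y j) }

/-- `p` is a probability vector. -/
def IsProbVec {M : ℕ} (p : Fin M → ℝ) : Prop := (∀ i, 0 ≤ p i) ∧ ∑ i, p i = 1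

/-- χ²-divergence between probability vectors, with generator f(t) = (t-1)²/2. -/
noncomputable def chiSqDiv {M : ℕ} (pt p : Fin M → ℝ) : ℝ :=
  ∑ i, p i * ((pt i / p i - 1) ^ 2 / 2)

/-- Robust optimal transport cost with marginal χ²-relaxation budgets ρ₁, ρ₂. -/
noncomputable def robustW {X : Type*} [MetricSpace X] {M N : ℕ}
    (x : Fin M → X) (y : Fin N → X) (p : Fin M → ℝ) (q : Fin N → ℝ) (ρ₁ ρ₂ : ℝ) : ℝ :=
  sInf { c : ℝ | ∃ pt qt, IsProbVec pt ∧ IsProbVec qt ∧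
    chiSqDiv pt p ≤ ρ₁ ∧ chiSqDiv qt q ≤ ρ₂ ∧ c = discreteW x y pt qt }

/-- The linear "marginals and cost" map used in the duality proof. -/
noncomputable def OTmap (M N : ℕ) (c : Fin M → Fin N → ℝ) :
    ((Fin M × Fin N) → ℝ) →ₗ[ℝ] (Fin M → ℝ) × (Fin N → ℝ) × ℝ where
  toFun π := (fun i => ∑ j, π (i, j), fun j => ∑ i, π (i, j),
    ∑ pr : Fin M × Fin N, π pr * c pr.1 pr.2)
  map_add' a b := by
    refine Prod.ext ?_ (Prod.ext ?_ ?_) <;>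
      first
      | (funext k; simp [Finset.sum_add_distrib])
      | simp [Finset.sum_add_distrib, add_mul]
  map_smul' r a := by
    refine Prod.ext ?_ (Prod.ext ?_ ?_) <;>
      first
      | (funext k; simp [Finset.mul_sum])
      | simp [Finset.mul_sum, mul_assoc]

lemma OTmap_single (M N : ℕ) (c : Fin M → Fin N → ℝ) (i : Fin M) (j : Fin N) :
    OTmap M N c (Pi.single (i, j) 1) = (Pi.single i 1, Pi.single j 1, c i j) := by
  refine Prod.ext ?_ (Prod.ext ?_ ?_)
  · funext i'
    simp only [OTmap, LinearMap.coe_mk, AddHom.coe_mk, Pi.single_apply, Prod.ext_iff]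
    by_cases h : i' = i <;> simp [h]
  · funext j'
    simp only [OTmap, LinearMap.coe_mk, AddHom.coe_mk, Pi.single_apply, Prod.ext_iff]
    by_cases h : j' = j <;> simp [h]
  · simp only [OTmap, LinearMap.coe_mk, AddHom.coe_mk, Pi.single_apply, Prod.ext_iff]
    rw [Fintype.sum_prod_type]
    rw [Finset.sum_eq_single i, Finset.sum_eq_single j] <;> simp +contextual [eq_comm]

section Decomp

variable {M N : ℕ} (f : ((Fin M → ℝ) × (Fin N → ℝ) × ℝ) →L[ℝ] ℝ)

lemma decomp_fst (a : Fin M → ℝ) :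
    f (a, 0, 0) = ∑ i, a i * f (Pi.single i 1, 0, 0) := by
  have h : ((a, (0 : Fin N → ℝ), (0:ℝ)) : (Fin M → ℝ) × (Fin N → ℝ) × ℝ)
      = ∑ i, a i • ((Pi.single i 1, 0, 0) : (Fin M → ℝ) × (Fin N → ℝ) × ℝ) := by
    refine Prod.ext ?_ (Prod.ext ?_ ?_)
    · simp only [Prod.fst_sum, Prod.smul_mk]
      rw [show (fun i => a i • (Pi.single i 1 : Fin M → ℝ)) = fun i => Pi.single i (a i) by
        funext i; simp [← Pi.single_smul]]
      exact (Finset.univ_sum_single a).symm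
    · simp [Prod.snd_sum, Prod.fst_sum]
    · simp [Prod.snd_sum]
  rw [h, map_sum]
  refine Finset.sum_congr rfl fun i _ => ?_
  rw [map_smul, smul_eq_mul]

lemma decomp_snd (b : Fin N → ℝ) :
    f (0, b, 0) = ∑ j, b j * f (0, Pi.single j 1, 0) := by
  have h : (((0 : Fin M → ℝ), b, (0:ℝ)) : (Fin M → ℝ) × (Fin N → ℝ) × ℝ)
      = ∑ j, b j • (((0 : Fin M → ℝ), Pi.single j 1, 0) :
          (Fin M → ℝ) × (Fin N → ℝ) × ℝ) := by
    refine Prod.ext ?_ (Prod.ext ?_ ?_)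
    · simp [Prod.fst_sum]
    · simp only [Prod.snd_sum, Prod.fst_sum, Prod.smul_mk]
      rw [show (fun j => b j • (Pi.single j 1 : Fin N → ℝ)) = fun j => Pi.single j (b j) by
        funext j; simp [← Pi.single_smul]]
      exact (Finset.univ_sum_single b).symm
    · simp [Prod.snd_sum]
  rw [h, map_sum]
  refine Finset.sum_congr rfl fun j _ => ?_
  rw [map_smul, smul_eq_mul]

lemma decomp_full (a : Fin M → ℝ) (b : Fin N → ℝ) (t : ℝ) :
    f (a, b, t) = f (a, 0, 0) + f (0, b, 0) + t * f (0, 0, 1) := by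
  have h : ((a, b, t) : (Fin M → ℝ) × (Fin N → ℝ) × ℝ)
      = (a, 0, 0) + (0, b, 0) + t • ((0, 0, 1) : (Fin M → ℝ) × (Fin N → ℝ) × ℝ) := by
    refine Prod.ext ?_ (Prod.ext ?_ ?_) <;> simp
  rw [h, map_add, map_add, map_smul, smul_eq_mul]

end Decomp

set_option maxHeartbeats 1600000 in
/-- Kantorovich–Rubinstein duality for finite discrete optimal transport. -/
theorem discreteW_eq_dual {X : Type*} [MetricSpace X] {M N : ℕ}
    (x : Fin M → X) (y : Fin N → X) (pt : Fin M → ℝ) (qt : Fin N → ℝ)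
    (hpt : IsProbVec pt) (hqt : IsProbVec qt) :
    discreteW x y pt qt =
      sSup { w : ℝ | ∃ D : X → ℝ,
        (∀ a b : X, |D a - D b| ≤ dist a b) ∧
        w = ∑ i, pt i * D (x i) - ∑ j, qt j * D (y j) } := by
  obtain ⟨hpt0, hpt1⟩ := hpt
  obtain ⟨hqt0, hqt1⟩ := hqt
  haveI hNM : Nonempty (Fin M) := by
    rcases isEmpty_or_nonempty (Fin M) with h | h
    · rw [Finset.univ_eq_empty, Finset.sum_empty] at hpt1; norm_num at hpt1
    · exact h
  haveI hNN : Nonempty (Fin N) := by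
    rcases isEmpty_or_nonempty (Fin N) with h | h
    · rw [Finset.univ_eq_empty, Finset.sum_empty] at hqt1; norm_num at hqt1
    · exact h
  set CS : Set ℝ := { c : ℝ | ∃ π : Fin M → Fin N → ℝ,
    (∀ i j, 0 ≤ π i j) ∧ (∀ i, ∑ j, π i j = pt i) ∧ (∀ j, ∑ i, π i j = qt j) ∧
    c = ∑ i, ∑ j, π i j * dist (x i) (y j) } with hCS
  set DS : Set ℝ := { w : ℝ | ∃ D : X → ℝ,
    (∀ a b : X, |D a - D b| ≤ dist a b) ∧
    w = ∑ i, pt i * D (x i) - ∑ j, qt j * D (y j) } with hDS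
  have hdW : discreteW x y pt qt = sInf CS := rfl
  -- the product coupling
  have hprod : (∑ i, ∑ j, (pt i * qt j) * dist (x i) (y j)) ∈ CS := by
    refine ⟨fun i j => pt i * qt j, fun i j => mul_nonneg (hpt0 i) (hqt0 j), ?_, ?_, rfl⟩
    · intro i; rw [← Finset.mul_sum, hqt1, mul_one]
    · intro j; rw [← Finset.sum_mul, hpt1, one_mul]
  have hCSne : CS.Nonempty := ⟨_, hprod⟩
  have hCSbdd : BddBelow CS := by
    refine ⟨0, fun c hc => ?_⟩
    obtain ⟨π, hπ0, _, _, rfl⟩ := hc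
    exact Finset.sum_nonneg fun i _ => Finset.sum_nonneg fun j _ =>
      mul_nonneg (hπ0 i j) dist_nonneg
  -- weak duality
  have weak : ∀ w ∈ DS, ∀ c ∈ CS, w ≤ c := by
    rintro w ⟨D, hD, rfl⟩ c ⟨π, hπ0, hrow, hcol, rfl⟩
    have h1 : ∑ i, pt i * D (x i) = ∑ i, ∑ j, π i j * D (x i) := by
      refine Finset.sum_congr rfl fun i _ => ?_
      rw [← hrow i, Finset.sum_mul]
    have h2 : ∑ j, qt j * D (y j) = ∑ i, ∑ j, π i j * D (y j) := by
      rw [Finset.sum_comm]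
      refine Finset.sum_congr rfl fun j _ => ?_
      rw [← hcol j, Finset.sum_mul]
    rw [h1, h2, ← Finset.sum_sub_distrib]
    refine Finset.sum_le_sum fun i _ => ?_
    rw [← Finset.sum_sub_distrib]
    refine Finset.sum_le_sum fun j _ => ?_
    rw [← mul_sub]
    refine mul_le_mul_of_nonneg_left ?_ (hπ0 i j)
    exact (le_abs_self _).trans (hD (x i) (y j))
  have hDSne : DS.Nonempty := ⟨0, fun _ => 0, fun a b => by simpa using dist_nonneg, by simp⟩
  have hDSbdd : BddAbove DS :=
    ⟨sInf CS, fun w hw => le_csInf hCSne (weak w hw)⟩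
  -- strong duality: for all ε > 0, sInf CS - ε ≤ sSup DS
  have strong : ∀ ε : ℝ, 0 < ε → sInf CS - ε ≤ sSup DS := by
    intro ε hε
    set c : Fin M → Fin N → ℝ := fun i j => dist (x i) (y j) with hc
    set T := OTmap M N c with hT
    have hTcont : Continuous T := T.continuous_of_finiteDimensional
    set P : Set ((Fin M → ℝ) × (Fin N → ℝ) × ℝ) :=
      T '' stdSimplex ℝ (Fin M × Fin N) with hP
    have hPconv : Convex ℝ P := (convex_stdSimplex ℝ _).linear_image T
    have hPcl : IsClosed P :=
      ((isCompact_stdSimplex _ _).image hTcont).isClosed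
    set z : (Fin M → ℝ) × (Fin N → ℝ) × ℝ := (pt, qt, sInf CS - ε) with hz
    have hzP : z ∉ P := by
      rintro ⟨π, hπ, hTπ⟩
      have hmem : sInf CS - ε ∈ CS := by
        refine ⟨fun i j => π (i, j), fun i j => hπ.1 (i, j), ?_, ?_, ?_⟩
        · intro i
          exact congrFun (congrArg Prod.fst hTπ) i
        · intro j
          exact congrFun (congrArg (fun w => w.2.1) hTπ) j
        · have h3 : (T π).2.2 = sInf CS - ε := congrArg (fun w => w.2.2) hTπ
          rw [← h3]
          show (∑ pr : Fin M × Fin N, π pr * c pr.1 pr.2) = _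
          rw [Fintype.sum_prod_type]
      have := csInf_le hCSbdd hmem
      linarith
    obtain ⟨f, u, hfP, hfz⟩ := geometric_hahn_banach_closed_point hPconv hPcl hzP
    set A : Fin M → ℝ := fun i => f (Pi.single i 1, 0, 0) with hA
    set B : Fin N → ℝ := fun j => f (0, Pi.single j 1, 0) with hB
    set γ : ℝ := f (0, 0, 1) with hγ
    have hdec : ∀ (a : Fin M → ℝ) (b : Fin N → ℝ) (t : ℝ),
        f (a, b, t) = (∑ i, a i * A i) + (∑ j, b j * B j) + t * γ := by
      intro a b t
      rw [decomp_full, decomp_fst, decomp_snd]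
    -- elementary inequalities
    have hElem : ∀ i j, A i + B j + c i j * γ < u := by
      intro i j
      have hmem : T (Pi.single (i, j) 1) ∈ P :=
        ⟨_, single_mem_stdSimplex ℝ (i, j), rfl⟩
      have := hfP _ hmem
      rw [hT, OTmap_single, hdec] at this
      simpa [Finset.sum_ite_eq', Pi.single_apply, ite_mul] using this
    have hzval : u < (∑ i, pt i * A i) + (∑ j, qt j * B j) + (sInf CS - ε) * γ := by
      have := hfz
      rw [hz, hdec] at this
      exact this
    -- γ < 0
    have hγneg : γ < 0 := by
      by_contra h
      push_neg at h
      set c0 := ∑ i, ∑ j, (pt i * qt j) * dist (x i) (y j) with hc0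
      have hsimp : (fun pr : Fin M × Fin N => pt pr.1 * qt pr.2) ∈
          stdSimplex ℝ (Fin M × Fin N) := by
        constructor
        · exact fun pr => mul_nonneg (hpt0 pr.1) (hqt0 pr.2)
        · rw [Fintype.sum_prod_type]
          simp only [← Finset.mul_sum, hqt1, mul_one]
          exact hpt1
      have hTval : T (fun pr : Fin M × Fin N => pt pr.1 * qt pr.2) = (pt, qt, c0) := by
        refine Prod.ext ?_ (Prod.ext ?_ ?_)
        · funext i
          show (∑ j, pt i * qt j) = pt i
          rw [← Finset.mul_sum, hqt1, mul_one]
        · funext j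
          show (∑ i, pt i * qt j) = qt j
          rw [← Finset.sum_mul, hpt1, one_mul]
        · show (∑ pr : Fin M × Fin N, (pt pr.1 * qt pr.2) * c pr.1 pr.2) = c0
          rw [Fintype.sum_prod_type, hc0]
      have hmem : ((pt, qt, c0) : (Fin M → ℝ) × (Fin N → ℝ) × ℝ) ∈ P :=
        ⟨_, hsimp, hTval⟩
      have h1 := hfP _ hmem
      rw [hdec] at h1
      have h2 : sInf CS ≤ c0 := csInf_le hCSbdd hprod
      nlinarith
    -- build the dual potentials
    set g : Fin N → ℝ := fun j => B j / (-γ) with hg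
    set F : Fin M → ℝ := fun i => (A i - u) / (-γ) with hF
    have hγpos : 0 < -γ := by linarith
    have hFg : ∀ i j, F i + g j ≤ c i j := by
      intro i j
      rw [hF, hg]
      rw [← add_div, div_le_iff₀ hγpos]
      nlinarith [hElem i j]
    -- the Lipschitz potential
    set D : X → ℝ := fun z => Finset.univ.inf' Finset.univ_nonempty
      (fun j => dist z (y j) - g j) with hDdef
    have hDle : ∀ a b : X, D a ≤ dist a b + D b := by
      intro a b
      obtain ⟨j, -, hj⟩ := Finset.exists_mem_eq_inf' Finset.univ_nonempty
        (fun j => dist b (y j) - g j)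
      have h1 : D a ≤ dist a (y j) - g j :=
        Finset.inf'_le _ (Finset.mem_univ j)
      have h2 : dist a (y j) ≤ dist a b + dist b (y j) := dist_triangle a b (y j)
      have h3 : D b = dist b (y j) - g j := hj
      rw [h3]
      linarith
    have hDlip : ∀ a b : X, |D a - D b| ≤ dist a b := by
      intro a b
      rw [abs_sub_le_iff]
      constructor
      · linarith [hDle a b]
      · rw [dist_comm a b]; linarith [hDle b a]
    have hDx : ∀ i, F i ≤ D (x i) := by
      intro i
      refine Finset.le_inf' _ _ fun j _ => ?_
      have h := hFg i j
      simp only [hc] at h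
      linarith
    have hDy : ∀ j, D (y j) ≤ -g j := by
      intro j
      have h := Finset.inf'_le (b := j) (fun j' => dist (y j) (y j') - g j')
        (Finset.mem_univ j)
      have h0 : dist (y j) (y j) - g j = -g j := by simp
      exact le_of_le_of_eq h h0
    -- the dual value
    have hval : (∑ i, pt i * D (x i) - ∑ j, qt j * D (y j)) ∈ DS := ⟨D, hDlip, rfl⟩
    have hbound : sInf CS - ε ≤ ∑ i, pt i * D (x i) - ∑ j, qt j * D (y j) := by
      have h1 : ∑ i, pt i * F i ≤ ∑ i, pt i * D (x i) :=
        Finset.sum_le_sum fun i _ => mul_le_mul_of_nonneg_left (hDx i) (hpt0 i)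
      have h2 : ∑ j, qt j * D (y j) ≤ ∑ j, qt j * (-g j) :=
        Finset.sum_le_sum fun j _ => mul_le_mul_of_nonneg_left (hDy j) (hqt0 j)
      have k1 : (∑ i, pt i * F i) * (-γ) = (∑ i, pt i * A i) - u := by
        rw [Finset.sum_mul]
        have : ∀ i : Fin M, pt i * F i * (-γ) = pt i * A i - pt i * u := by
          intro i
          simp only [hF]
          have hb : (A i - u) / -γ * -γ = A i - u := div_mul_cancel₀ _ (ne_of_gt hγpos)
          linear_combination pt i * hb
        rw [Finset.sum_congr rfl fun i _ => this i, Finset.sum_sub_distrib,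
          ← Finset.sum_mul, hpt1, one_mul]
      have k2 : (∑ j, qt j * (-g j)) * (-γ) = -(∑ j, qt j * B j) := by
        rw [Finset.sum_mul]
        have : ∀ j : Fin N, qt j * (-g j) * (-γ) = -(qt j * B j) := by
          intro j
          simp only [hg]
          have hb : B j / -γ * -γ = B j := div_mul_cancel₀ _ (ne_of_gt hγpos)
          linear_combination (-(qt j)) * hb
        rw [Finset.sum_congr rfl fun j _ => this j, Finset.sum_neg_distrib]
      have h3 : sInf CS - ε ≤ ∑ i, pt i * F i - ∑ j, qt j * (-g j) := by
        have k3 : (∑ i, pt i * F i - ∑ j, qt j * (-g j)) * (-γ)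
            = (∑ i, pt i * F i) * (-γ) - (∑ j, qt j * (-g j)) * (-γ) := sub_mul _ _ _
        have k4 : (sInf CS - ε) * (-γ) = -((sInf CS - ε) * γ) := by ring
        have key : (sInf CS - ε) * (-γ) < (∑ i, pt i * F i - ∑ j, qt j * (-g j)) * (-γ) := by
          rw [k3, k1, k2, k4]
          linarith
        exact le_of_lt (lt_of_mul_lt_mul_right key (le_of_lt hγpos))
      linarith
    calc sInf CS - ε ≤ _ := hbound
      _ ≤ sSup DS := le_csSup hDSbdd hval
  -- conclude
  rw [hdW]
  have hle : sSup DS ≤ sInf CS :=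
    csSup_le hDSne fun w hw => le_csInf hCSne (weak w hw)
  have hge : sInf CS ≤ sSup DS := by
    by_contra h
    push_neg at h
    have := strong ((sInf CS - sSup DS) / 2) (by linarith)
    linarith
  linarith

theorem robustW_dual_lipschitz {X : Type*} [MetricSpace X] {M N : ℕ}
    (x : Fin M → X) (y : Fin N → X) (p : Fin M → ℝ) (q : Fin N → ℝ)
    (hp : IsProbVec p) (hq : IsProbVec q) (hp' : ∀ i, 0 < p i) (hq' : ∀ j, 0 < q j)
    (ρ₁ ρ₂ : ℝ) (hρ₁ : 0 ≤ ρ₁) (hρ₂ : 0 ≤ ρ₂) :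
    robustW x y p q ρ₁ ρ₂ =
      sInf { v : ℝ | ∃ pt qt, IsProbVec pt ∧ IsProbVec qt ∧
        chiSqDiv pt p ≤ ρ₁ ∧ chiSqDiv qt q ≤ ρ₂ ∧
        v = sSup { w : ℝ | ∃ D : X → ℝ,
          (∀ a b : X, |D a - D b| ≤ dist a b) ∧
          w = ∑ i, pt i * D (x i) - ∑ j, qt j * D (y j) } } := by
  unfold robustW
  congr 1
  ext v
  constructor
  · rintro ⟨pt, qt, h1, h2, h3, h4, rfl⟩
    exact ⟨pt, qt, h1, h2, h3, h4, discreteW_eq_dual x y pt qt h1 h2⟩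
  · rintro ⟨pt, qt, h1, h2, h3, h4, rfl⟩
    exact ⟨pt, qt, h1, h2, h3, h4, (discreteW_eq_dual x y pt qt h1 h2).symm⟩
end

section
/- Let (X,d) be a metric space, let a_1,…,a_{n_a} (outlier points), c_1,…,c_{n_c} (clean points), and y_1,…,y_N be points of X with n_a, n_c, N ≥ 1, and set γ = n_a/(n_a+n_c). Let p_a ∈ Δ^{n_a} and p_c ∈ Δ^{n_c} be the uniform vectors on the outlier and clean points respectively, let p_X ∈ Δ^{n_a+n_c} be the uniform vector on all n_a+n_c points (so p_X = γ·p_a + (1−γ)·p_c as a measure), and let q ∈ Δ^N be the uniform vector on y_1,…,y_N. Suppose W(p_a, p_c) = k · W(p_c, q) for some k ≥ 1, where the transport costs use the points indicated. Then for every ρ ≥ 0: W^rob_{ρ,0}(p_X, q) ≤ max(1, 1 + kγ − k·√(2ργ(1−γ))) · W(p_c, q). -/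
open Finset

section Helpers
variable {X : Type*} [MetricSpace X] {M N : ℕ}

lemma discreteW_set_nonneg (x : Fin M → X) (y : Fin N → X) (p : Fin M → ℝ) (q : Fin N → ℝ) :
    ∀ cc ∈ { c : ℝ | ∃ π : Fin M → Fin N → ℝ,
      (∀ i j, 0 ≤ π i j) ∧ (∀ i, ∑ j, π i j = p i) ∧ (∀ j, ∑ i, π i j = q j) ∧
      c = ∑ i, ∑ j, π i j * dist (x i) (y j) }, 0 ≤ cc := by
  rintro cc ⟨π, hπ, -, -, rfl⟩
  exact Finset.sum_nonneg fun i _ => Finset.sum_nonneg fun j _ =>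
    mul_nonneg (hπ i j) dist_nonneg

lemma discreteW_nonneg (x : Fin M → X) (y : Fin N → X) (p : Fin M → ℝ) (q : Fin N → ℝ) :
    0 ≤ discreteW x y p q :=
  Real.sInf_nonneg (discreteW_set_nonneg x y p q)

lemma discreteW_le (x : Fin M → X) (y : Fin N → X) (p : Fin M → ℝ) (q : Fin N → ℝ)
    (π : Fin M → Fin N → ℝ) (hπ : ∀ i j, 0 ≤ π i j) (hr : ∀ i, ∑ j, π i j = p i)
    (hc : ∀ j, ∑ i, π i j = q j) :
    discreteW x y p q ≤ ∑ i, ∑ j, π i j * dist (x i) (y j) :=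
  csInf_le ⟨0, discreteW_set_nonneg x y p q⟩ ⟨π, hπ, hr, hc, rfl⟩

lemma exists_plan (x : Fin M → X) (y : Fin N → X) {p : Fin M → ℝ} {q : Fin N → ℝ}
    (hp : IsProbVec p) (hq : IsProbVec q) {ε : ℝ} (hε : 0 < ε) :
    ∃ π : Fin M → Fin N → ℝ, (∀ i j, 0 ≤ π i j) ∧ (∀ i, ∑ j, π i j = p i) ∧
      (∀ j, ∑ i, π i j = q j) ∧
      ∑ i, ∑ j, π i j * dist (x i) (y j) < discreteW x y p q + ε := by
  have hne : Set.Nonempty { c : ℝ | ∃ π : Fin M → Fin N → ℝ,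
      (∀ i j, 0 ≤ π i j) ∧ (∀ i, ∑ j, π i j = p i) ∧ (∀ j, ∑ i, π i j = q j) ∧
      c = ∑ i, ∑ j, π i j * dist (x i) (y j) } := by
    refine ⟨_, fun i j => p i * q j, fun i j => mul_nonneg (hp.1 i) (hq.1 j),
      fun i => by rw [← Finset.mul_sum, hq.2, mul_one],
      fun j => by rw [← Finset.sum_mul, hp.2, one_mul], rfl⟩
  obtain ⟨cc, ⟨π, h1, h2, h3, rfl⟩, hlt⟩ := Real.lt_sInf_add_pos hne hε
  exact ⟨π, h1, h2, h3, hlt⟩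

end Helpers

theorem robustW_outlier_bound {X : Type*} [MetricSpace X] {na nc N : ℕ}
    (hna : 1 ≤ na) (hnc : 1 ≤ nc) (hN : 1 ≤ N)
    (a : Fin na → X) (c : Fin nc → X) (y : Fin N → X)
    (k ρ : ℝ) (hk : 1 ≤ k) (hρ : 0 ≤ ρ)
    (γ : ℝ) (hγ : γ = (na : ℝ) / ((na : ℝ) + nc))
    (hW : discreteW a c (fun _ => 1 / (na : ℝ)) (fun _ => 1 / (nc : ℝ))
        = k * discreteW c y (fun _ => 1 / (nc : ℝ)) (fun _ => 1 / (N : ℝ))) :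
    robustW (Fin.append a c) y (fun _ => 1 / ((na : ℝ) + nc)) (fun _ => 1 / (N : ℝ)) ρ 0
      ≤ max 1 (1 + k * γ - k * Real.sqrt (2 * ρ * γ * (1 - γ)))
        * discreteW c y (fun _ => 1 / (nc : ℝ)) (fun _ => 1 / (N : ℝ)) := by
  have hA : (0:ℝ) < na := by exact_mod_cast hna
  have hC : (0:ℝ) < nc := by exact_mod_cast hnc
  have hNp : (0:ℝ) < N := by exact_mod_cast hN
  have hA' : (na:ℝ) ≠ 0 := hA.ne'
  have hC' : (nc:ℝ) ≠ 0 := hC.ne'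
  have hN' : (N:ℝ) ≠ 0 := hNp.ne'
  have hs : (0:ℝ) < (na:ℝ) + nc := by positivity
  have hs' : ((na:ℝ) + nc) ≠ 0 := hs.ne'
  have hγ0 : 0 < γ := by rw [hγ]; positivity
  have hγ1 : γ < 1 := by rw [hγ, div_lt_one hs]; linarith
  set T := Real.sqrt (2 * ρ * γ * (1 - γ)) with hTdef
  have hT0 : 0 ≤ T := Real.sqrt_nonneg _
  set t := min γ T with htdef
  have ht0 : 0 ≤ t := le_min hγ0.le hT0
  have htγ : t ≤ γ := min_le_left _ _
  have htT : t ≤ T := min_le_right _ _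
  set pt : Fin (na + nc) → ℝ :=
    Fin.append (fun _ => (γ - t) / na) (fun _ => (1 - γ + t) / nc) with hptdef
  -- pt is a probability vector
  have hpt_prob : IsProbVec pt := by
    constructor
    · intro i
      refine Fin.addCases (fun i => ?_) (fun i => ?_) i
      · simp only [hptdef, Fin.append_left]
        exact div_nonneg (by linarith) hA.le
      · simp only [hptdef, Fin.append_right]
        exact div_nonneg (by linarith) hC.le
    · rw [hptdef, Fin.sum_univ_add]
      simp only [Fin.append_left, Fin.append_right, Finset.sum_const, Finset.card_univ,
        Fintype.card_fin, nsmul_eq_mul]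
      field_simp
      ring
  have hq_prob : IsProbVec (fun _ : Fin N => 1 / (N:ℝ)) := by
    refine ⟨fun i => by positivity, ?_⟩
    simp only [Finset.sum_const, Finset.card_univ, Fintype.card_fin, nsmul_eq_mul]
    field_simp
  have hpa_prob : IsProbVec (fun _ : Fin na => 1 / (na:ℝ)) := by
    refine ⟨fun i => by positivity, ?_⟩
    simp only [Finset.sum_const, Finset.card_univ, Fintype.card_fin, nsmul_eq_mul]
    field_simp
  have hpc_prob : IsProbVec (fun _ : Fin nc => 1 / (nc:ℝ)) := by
    refine ⟨fun i => by positivity, ?_⟩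
    simp only [Finset.sum_const, Finset.card_univ, Fintype.card_fin, nsmul_eq_mul]
    field_simp
  -- chi squared constraint
  have hchi : chiSqDiv pt (fun _ => 1 / ((na : ℝ) + nc)) ≤ ρ := by
    have hcomp : chiSqDiv pt (fun _ => 1 / ((na : ℝ) + nc))
        = t ^ 2 * ((na : ℝ) + nc) ^ 2 / (2 * na * nc) := by
      simp only [chiSqDiv, hptdef, Fin.sum_univ_add, Fin.append_left, Fin.append_right,
        Finset.sum_const, Finset.card_univ, Fintype.card_fin, nsmul_eq_mul]
      rw [hγ]
      field_simp
      ring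
    have hT2 : T ^ 2 = 2 * ρ * γ * (1 - γ) := Real.sq_sqrt
      (mul_nonneg (mul_nonneg (by linarith) hγ0.le) (by linarith))
    have ht2 : t ^ 2 ≤ 2 * ρ * γ * (1 - γ) := by
      rw [← hT2]; exact pow_le_pow_left₀ ht0 htT 2
    have hγprod : γ * (1 - γ) = (na : ℝ) * nc / ((na : ℝ) + nc) ^ 2 := by
      rw [hγ]; field_simp; ring
    have h2 : t ^ 2 ≤ 2 * ρ * ((na : ℝ) * nc / ((na : ℝ) + nc) ^ 2) := by
      calc t ^ 2 ≤ 2 * ρ * γ * (1 - γ) := ht2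
        _ = 2 * ρ * (γ * (1 - γ)) := by ring
        _ = _ := by rw [hγprod]
    rw [hcomp, div_le_iff₀ (by positivity)]
    calc t ^ 2 * ((na : ℝ) + nc) ^ 2
        ≤ 2 * ρ * ((na : ℝ) * nc / ((na : ℝ) + nc) ^ 2) * ((na : ℝ) + nc) ^ 2 :=
          mul_le_mul_of_nonneg_right h2 (by positivity)
      _ = ρ * (2 * na * nc) := by field_simp
  have hchiq : chiSqDiv (fun _ : Fin N => 1 / (N:ℝ)) (fun _ => 1 / (N:ℝ)) ≤ 0 := by
    have h1N : (1:ℝ) / N ≠ 0 := by positivity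
    simp only [chiSqDiv, Finset.sum_const, Finset.card_univ, Fintype.card_fin, nsmul_eq_mul]
    rw [div_self h1N]
    simp
  set W2 := discreteW c y (fun _ => 1 / (nc : ℝ)) (fun _ => 1 / (N : ℝ)) with hW2def
  have hW2 : 0 ≤ W2 := discreteW_nonneg _ _ _ _
  -- key transport bound
  have key : discreteW (Fin.append a c) y pt (fun _ => 1 / (N:ℝ)) ≤ (1 + k * (γ - t)) * W2 := by
    refine le_of_forall_pos_le_add fun ε hε => ?_
    have hden : (0:ℝ) < γ - t + 1 := by linarith
    set δ := ε / (γ - t + 1) with hδdef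
    have hδ : 0 < δ := div_pos hε hden
    obtain ⟨π1, h1n, h1r, h1c, h1cost⟩ := exists_plan a c hpa_prob hpc_prob hδ
    obtain ⟨π2, h2n, h2r, h2c, h2cost⟩ := exists_plan c y hpc_prob hq_prob hδ
    set S1 := ∑ i, ∑ l, π1 i l * dist (a i) (c l) with hS1
    set S2 := ∑ l, ∑ j, π2 l j * dist (c l) (y j) with hS2
    set πt : Fin (na + nc) → Fin N → ℝ :=
      Fin.append (fun i j => (γ - t) * nc * ∑ l, π1 i l * π2 l j)
        (fun i j => (1 - γ + t) * π2 i j) with hπtdef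
    have hπt_nonneg : ∀ i j, 0 ≤ πt i j := by
      intro i j
      refine Fin.addCases (motive := fun i => 0 ≤ πt i j) (fun i => ?_) (fun i => ?_) i
      · simp only [hπtdef, Fin.append_left]
        exact mul_nonneg (mul_nonneg (by linarith) hC.le)
          (Finset.sum_nonneg fun l _ => mul_nonneg (h1n i l) (h2n l j))
      · simp only [hπtdef, Fin.append_right]
        exact mul_nonneg (by linarith) (h2n i j)
    have hπt_row : ∀ i, ∑ j, πt i j = pt i := by
      intro i
      refine Fin.addCases (motive := fun i => ∑ j, πt i j = pt i) (fun i => ?_) (fun i => ?_) i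
      · simp only [hπtdef, hptdef, Fin.append_left]
        rw [← Finset.mul_sum, Finset.sum_comm]
        simp only [← Finset.mul_sum]
        simp only [h2r]
        rw [← Finset.sum_mul]
        simp only [h1r]
        field_simp
      · simp only [hπtdef, hptdef, Fin.append_right]
        rw [← Finset.mul_sum]
        simp only [h2r]
        rw [mul_one_div]
    have hπt_col : ∀ j, ∑ i, πt i j = 1 / (N:ℝ) := by
      intro j
      rw [Fin.sum_univ_add]
      simp only [hπtdef, Fin.append_left, Fin.append_right]
      have e1 : ∑ i : Fin na, (γ - t) * (nc:ℝ) * ∑ l, π1 i l * π2 l j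
          = (γ - t) * (1 / (N:ℝ)) := by
        rw [← Finset.mul_sum, Finset.sum_comm]
        simp only [← Finset.sum_mul]
        simp only [h1c]
        rw [← Finset.mul_sum]
        simp only [h2c]
        field_simp
      have e2 : ∑ i : Fin nc, (1 - γ + t) * π2 i j = (1 - γ + t) * (1 / (N:ℝ)) := by
        rw [← Finset.mul_sum]
        simp only [h2c]
      rw [e1, e2]; ring
    have hcost : ∑ i, ∑ j, πt i j * dist (Fin.append a c i) (y j) ≤ (γ - t) * S1 + S2 := by
      rw [Fin.sum_univ_add]
      have hout : ∑ i : Fin na, ∑ j, πt (Fin.castAdd nc i) j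
            * dist (Fin.append a c (Fin.castAdd nc i)) (y j)
          ≤ (γ - t) * S1 + (γ - t) * S2 := by
        simp only [hπtdef, Fin.append_left]
        calc ∑ i : Fin na, ∑ j, ((γ - t) * (nc:ℝ) * ∑ l, π1 i l * π2 l j) * dist (a i) (y j)
            ≤ ∑ i : Fin na, ∑ j, ∑ l, (γ - t) * (nc:ℝ) * (π1 i l * π2 l j)
                * (dist (a i) (c l) + dist (c l) (y j)) := by
              refine Finset.sum_le_sum fun i _ => Finset.sum_le_sum fun j _ => ?_
              rw [Finset.mul_sum, Finset.sum_mul]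
              refine Finset.sum_le_sum fun l _ => ?_
              exact mul_le_mul_of_nonneg_left (dist_triangle (a i) (c l) (y j))
                (mul_nonneg (mul_nonneg (by linarith) hC.le)
                  (mul_nonneg (h1n i l) (h2n l j)))
          _ = ∑ i : Fin na, ∑ l, ((γ - t) * (π1 i l * dist (a i) (c l))
                + (γ - t) * (nc:ℝ) * π1 i l * ∑ j, π2 l j * dist (c l) (y j)) := by
              refine Finset.sum_congr rfl fun i _ => ?_
              rw [Finset.sum_comm]
              refine Finset.sum_congr rfl fun l _ => ?_
              have e3 : ∑ j, (γ - t) * (nc:ℝ) * (π1 i l * π2 l j)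
                    * (dist (a i) (c l) + dist (c l) (y j))
                  = ((γ - t) * (nc:ℝ) * π1 i l * dist (a i) (c l)) * (∑ j, π2 l j)
                    + (γ - t) * (nc:ℝ) * π1 i l * ∑ j, π2 l j * dist (c l) (y j) := by
                rw [Finset.mul_sum, Finset.mul_sum, ← Finset.sum_add_distrib]
                exact Finset.sum_congr rfl fun j _ => by ring
              rw [e3]
              simp only [h2r]
              congr 1
              field_simp
          _ = (γ - t) * S1 + (γ - t) * S2 := by
              simp only [Finset.sum_add_distrib]
              congr 1
              · rw [hS1, Finset.mul_sum]
                exact Finset.sum_congr rfl fun i _ => by rw [Finset.mul_sum]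
              · rw [Finset.sum_comm]
                have e4 : ∀ l, ∑ i : Fin na, (γ - t) * (nc:ℝ) * π1 i l
                      * (∑ j, π2 l j * dist (c l) (y j))
                    = (γ - t) * ∑ j, π2 l j * dist (c l) (y j) := by
                  intro l
                  rw [← Finset.sum_mul, ← Finset.mul_sum]
                  simp only [h1c]
                  have e5 : (γ - t) * (nc:ℝ) * (1 / (nc:ℝ)) = γ - t := by field_simp
                  rw [e5]
                simp only [e4]
                rw [hS2, ← Finset.mul_sum]
      have hcln : ∑ i : Fin nc, ∑ j, πt (Fin.natAdd na i) j
            * dist (Fin.append a c (Fin.natAdd na i)) (y j) = (1 - γ + t) * S2 := by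
        simp only [hπtdef, Fin.append_right]
        rw [hS2, Finset.mul_sum]
        refine Finset.sum_congr rfl fun l _ => ?_
        rw [Finset.mul_sum]
        exact Finset.sum_congr rfl fun j _ => by ring
      calc (∑ i : Fin na, ∑ j, πt (Fin.castAdd nc i) j
              * dist (Fin.append a c (Fin.castAdd nc i)) (y j))
            + ∑ i : Fin nc, ∑ j, πt (Fin.natAdd na i) j
              * dist (Fin.append a c (Fin.natAdd na i)) (y j)
          ≤ ((γ - t) * S1 + (γ - t) * S2) + (1 - γ + t) * S2 := add_le_add hout (le_of_eq hcln)
        _ = (γ - t) * S1 + S2 := by ring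
    have hplan := discreteW_le (Fin.append a c) y pt (fun _ => 1 / (N:ℝ)) πt
      hπt_nonneg hπt_row hπt_col
    rw [hW] at h1cost
    calc discreteW (Fin.append a c) y pt (fun _ => 1 / (N:ℝ))
        ≤ (γ - t) * S1 + S2 := hplan.trans hcost
      _ ≤ (γ - t) * (k * W2 + δ) + (W2 + δ) := by
          have h3 := mul_le_mul_of_nonneg_left h1cost.le (by linarith : (0:ℝ) ≤ γ - t)
          linarith [h2cost.le]
      _ = (1 + k * (γ - t)) * W2 + δ * (γ - t + 1) := by ring
      _ = (1 + k * (γ - t)) * W2 + ε := by rw [hδdef, div_mul_cancel₀ _ hden.ne']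
  -- assemble
  have hrob : robustW (Fin.append a c) y (fun _ => 1 / ((na : ℝ) + nc)) (fun _ => 1 / (N : ℝ)) ρ 0
      ≤ discreteW (Fin.append a c) y pt (fun _ => 1 / (N:ℝ)) := by
    apply csInf_le
    · refine ⟨0, ?_⟩
      rintro cc ⟨pt', qt', -, -, -, -, rfl⟩
      exact discreteW_nonneg _ _ _ _
    · exact ⟨pt, _, hpt_prob, hq_prob, hchi, hchiq, rfl⟩
  have hfin : (1 + k * (γ - t)) ≤ max 1 (1 + k * γ - k * T) := by
    rcases le_total γ T with h | h
    · have : t = γ := min_eq_left h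
      rw [this]
      simpa using le_max_left 1 _
    · have : t = T := min_eq_right h
      rw [this]
      have : 1 + k * (γ - T) = 1 + k * γ - k * T := by ring
      rw [this]
      exact le_max_right _ _
  calc robustW (Fin.append a c) y (fun _ => 1 / ((na : ℝ) + nc)) (fun _ => 1 / (N : ℝ)) ρ 0
      ≤ (1 + k * (γ - t)) * W2 := hrob.trans key
    _ ≤ max 1 (1 + k * γ - k * T) * W2 := mul_le_mul_of_nonneg_right hfin hW2
end
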